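/- In the group G_n, conjugation by g₁^k sends the normal form g₁^{k₁} g₂^{k₂} ⋯ g_{2n+1}^{k_{2n+1}} to g₁^{k + k₁ - k(-1)^{k₂+k₄+⋯+k_{2n}}} g₂^{k₂} ⋯ g_{2n+1}^{k_{2n+1}}. -/

import Mathlib

/-- The defining relators of the group `Gₙ`: generators are indexed by `{1, …, 2n+1}`;
for even `j`, `g_j g₁ g_j⁻¹ = g₁⁻¹` and `g_{j+1} g_j g_{j+1}⁻¹ = g₁ g_j`;
all other pairs of generators commute. -/
def relsG (n : ℕ) : Set (FreeGroup {i : ℕ // 1 ≤ i ∧ i ≤ 2*n+1}) :=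
  { w | (∃ j : {i : ℕ // 1 ≤ i ∧ i ≤ 2*n+1}, j.1 % 2 = 0 ∧
          w = FreeGroup.of j * FreeGroup.of ⟨1, by omega⟩ * (FreeGroup.of j)⁻¹ *
              FreeGroup.of ⟨1, by omega⟩) ∨
        (∃ j j1 : {i : ℕ // 1 ≤ i ∧ i ≤ 2*n+1}, j.1 % 2 = 0 ∧ j1.1 = j.1 + 1 ∧
          w = FreeGroup.of j1 * FreeGroup.of j * (FreeGroup.of j1)⁻¹ *
              (FreeGroup.of ⟨1, by omega⟩ * FreeGroup.of j)⁻¹) ∨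
        (∃ a b : {i : ℕ // 1 ≤ i ∧ i ≤ 2*n+1},
          ¬ ((a.1 = 1 ∧ b.1 % 2 = 0) ∨ (b.1 = 1 ∧ a.1 % 2 = 0) ∨
             (b.1 % 2 = 0 ∧ a.1 = b.1 + 1) ∨ (a.1 % 2 = 0 ∧ b.1 = a.1 + 1)) ∧
          w = FreeGroup.of a * FreeGroup.of b * (FreeGroup.of a)⁻¹ * (FreeGroup.of b)⁻¹) }

/-- The polycyclic group `Gₙ` of Hirsch length `2n+1`. -/
abbrev Gn (n : ℕ) := PresentedGroup (relsG n)

/-- The generator `g_i` of `Gₙ` (1-based index, `1 ≤ i ≤ 2n+1`). -/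
def gg (n : ℕ) (i : ℕ) : Gn n :=
  if h : 1 ≤ i ∧ i ≤ 2*n+1 then PresentedGroup.of ⟨i, h⟩ else 1

/-- `(-1)^m` for an integer `m`: `1` if `m` is even, `-1` if `m` is odd. -/
def eps (m : ℤ) : ℤ := if m % 2 = 0 then 1 else -1

lemma eps_add (a b : ℤ) : eps (a + b) = eps a * eps b := by
  simp only [eps]; split_ifs <;> omega

lemma relsG_one {n : ℕ} {r : FreeGroup {i : ℕ // 1 ≤ i ∧ i ≤ 2*n+1}} (hr : r ∈ relsG n) :
    PresentedGroup.mk (relsG n) r = 1 :=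
  (QuotientGroup.eq_one_iff r).mpr (Subgroup.subset_normalClosure hr)

lemma gg_eq (n i : ℕ) (h : 1 ≤ i ∧ i ≤ 2*n+1) : gg n i = PresentedGroup.of ⟨i, h⟩ :=
  dif_pos h

lemma even_rel (n j : ℕ) (hj : j % 2 = 0) (h1 : 1 ≤ j) (h2 : j ≤ 2*n+1) :
    gg n j * gg n 1 * (gg n j)⁻¹ = (gg n 1)⁻¹ := by
  have hr : (FreeGroup.of (⟨j, ⟨h1, h2⟩⟩ : {i : ℕ // 1 ≤ i ∧ i ≤ 2*n+1}) *
      FreeGroup.of ⟨1, by omega⟩ * (FreeGroup.of ⟨j, ⟨h1, h2⟩⟩)⁻¹ *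
      FreeGroup.of ⟨1, by omega⟩) ∈ relsG n := Or.inl ⟨⟨j, ⟨h1, h2⟩⟩, hj, rfl⟩
  have := relsG_one hr
  simp only [map_mul, map_inv] at this
  rw [gg_eq n j ⟨h1, h2⟩, gg_eq n 1 (by omega)]
  have h' : (PresentedGroup.of (⟨j, ⟨h1, h2⟩⟩ : {i : ℕ // 1 ≤ i ∧ i ≤ 2*n+1}) :
      Gn n) * PresentedGroup.of ⟨1, by omega⟩ * (PresentedGroup.of ⟨j, ⟨h1, h2⟩⟩)⁻¹ *
      PresentedGroup.of ⟨1, by omega⟩ = 1 := this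
  group at h' ⊢
  rw [mul_eq_one_iff_eq_inv] at h'
  exact h'

lemma comm_odd (n i : ℕ) (hi : i % 2 = 1) : Commute (gg n 1) (gg n i) := by
  by_cases h : 1 ≤ i ∧ i ≤ 2*n+1
  · rcases eq_or_ne i 1 with rfl | hne
    · exact Commute.refl _
    · have hr : (FreeGroup.of (⟨1, by omega⟩ : {i : ℕ // 1 ≤ i ∧ i ≤ 2*n+1}) *
          FreeGroup.of ⟨i, h⟩ * (FreeGroup.of ⟨1, by omega⟩)⁻¹ *
          (FreeGroup.of ⟨i, h⟩)⁻¹) ∈ relsG n := by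
        refine Or.inr (Or.inr ⟨⟨1, by omega⟩, ⟨i, h⟩, ?_, rfl⟩)
        simp only []
        omega
      have := relsG_one hr
      simp only [map_mul, map_inv] at this
      rw [gg_eq n 1 (by omega), gg_eq n i h]
      have h' : (PresentedGroup.of (⟨1, by omega⟩ : {i : ℕ // 1 ≤ i ∧ i ≤ 2*n+1}) :
          Gn n) * PresentedGroup.of ⟨i, h⟩ * (PresentedGroup.of ⟨1, by omega⟩)⁻¹ *
          (PresentedGroup.of ⟨i, h⟩)⁻¹ = 1 := this
      exact commutatorElement_eq_one_iff_mul_comm.mp h'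
  · have : gg n i = 1 := dif_neg h
    rw [this]; exact Commute.one_right _

lemma even_conj (n j : ℕ) (hj : j % 2 = 0) (h1 : 1 ≤ j) (h2 : j ≤ 2*n+1) (t : ℤ) :
    gg n j * gg n 1 ^ t * (gg n j)⁻¹ = gg n 1 ^ (-t) := by
  have h := even_rel n j hj h1 h2
  have : (MulAut.conj (gg n j)) (gg n 1 ^ t) = ((MulAut.conj (gg n j)) (gg n 1)) ^ t :=
    map_zpow _ _ _
  simp only [MulAut.conj_apply] at this
  rw [this, h, zpow_neg, inv_zpow]

lemma even_zpow_conj (n j : ℕ) (hj : j % 2 = 0) (h1 : 1 ≤ j) (h2 : j ≤ 2*n+1) (k t : ℤ) :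
    gg n j ^ k * gg n 1 ^ t = gg n 1 ^ (t * eps k) * gg n j ^ k := by
  have key : ∀ s : ℤ, gg n j * gg n 1 ^ s = gg n 1 ^ (-s) * gg n j := by
    intro s
    have := even_conj n j hj h1 h2 s
    rw [← this]; group
  have key' : ∀ s : ℤ, (gg n j)⁻¹ * gg n 1 ^ s = gg n 1 ^ (-s) * (gg n j)⁻¹ := by
    intro s
    have := even_conj n j hj h1 h2 (-s)
    rw [neg_neg] at this
    rw [← this]; group
  revert t
  induction k using Int.induction_on with
  | zero => intro t; simp [eps]
  | succ k ih =>
      intro t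
      rw [zpow_add_one, mul_assoc _ (gg n j), key, ← mul_assoc, ih (-t), mul_assoc,
        ← zpow_add_one]
      congr 2
      have : eps ((k : ℤ) + 1) = -eps (k : ℤ) := by simp only [eps]; split_ifs <;> omega
      rw [this]; ring
  | pred k ih =>
      intro t
      rw [zpow_sub_one, mul_assoc _ (gg n j)⁻¹, key', ← mul_assoc, ih (-t), mul_assoc,
        ← zpow_sub_one]
      congr 2
      have : eps (-(k : ℤ) - 1) = -eps (-(k : ℤ)) := by simp only [eps]; split_ifs <;> omega
      rw [this]; ring

lemma push (n : ℕ) (ks : ℕ → ℤ) : ∀ m, m ≤ 2*n → ∀ t : ℤ,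
    ((List.range m).map (fun i => gg n (i+2) ^ ks (i+2))).prod * gg n 1 ^ t =
    gg n 1 ^ (t * eps (∑ i ∈ Finset.range m, if i % 2 = 0 then ks (i+2) else 0)) *
    ((List.range m).map (fun i => gg n (i+2) ^ ks (i+2))).prod := by
  intro m
  induction m with
  | zero => intro _ t; simp [eps]
  | succ m ih =>
      intro hm t
      rw [List.range_succ, List.map_append, List.prod_append]
      simp only [List.map_cons, List.map_nil, List.prod_cons, List.prod_nil, mul_one]
      rw [Finset.sum_range_succ]
      rcases Nat.even_or_odd m with he | ho
      · have hm2 : m % 2 = 0 := Nat.even_iff.mp he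
        rw [if_pos hm2]
        rw [mul_assoc, even_zpow_conj n (m+2) (by omega) (by omega) (by omega),
          ← mul_assoc, ih (by omega), mul_assoc, mul_assoc]
        congr 1
        · congr 1
          rw [eps_add]; ring
      · have hm2 : m % 2 = 1 := Nat.odd_iff.mp ho
        rw [if_neg (by omega), add_zero]
        have hc : Commute (gg n 1 ^ t) (gg n (m+2) ^ ks (m+2)) :=
          (comm_odd n (m+2) (by omega)).zpow_zpow t _
        rw [mul_assoc, ← hc.eq, ← mul_assoc, ih (by omega), mul_assoc]

lemma sum_conv (ks : ℕ → ℤ) (n : ℕ) :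
    (∑ i ∈ Finset.range (2*n), if i % 2 = 0 then ks (i+2) else 0) =
    ∑ i ∈ Finset.range n, ks (2*i+2) := by
  induction n with
  | zero => simp
  | succ n ih =>
      have h1 : 2*(n+1) = (2*n + 1) + 1 := by ring
      rw [h1, Finset.sum_range_succ, Finset.sum_range_succ, ih, Finset.sum_range_succ]
      have e1 : (2*n) % 2 = 0 := by omega
      have e2 : ¬ ((2*n+1) % 2 = 0) := by omega
      rw [if_pos e1, if_neg e2, add_zero]

theorem stmt10 (n : ℕ) (kk : ℤ) (ks : ℕ → ℤ) :
    gg n 1 ^ kk * ((List.range (2*n+1)).map (fun i => gg n (i+1) ^ ks (i+1))).prod *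
      gg n 1 ^ (-kk) =
    gg n 1 ^ (kk + ks 1 - kk * eps (∑ i ∈ Finset.range n, ks (2*i+2))) *
      ((List.range (2*n)).map (fun i => gg n (i+2) ^ ks (i+2))).prod := by
  have hsplit : ((List.range (2*n+1)).map (fun i => gg n (i+1) ^ ks (i+1))).prod =
      gg n 1 ^ ks 1 * ((List.range (2*n)).map (fun i => gg n (i+2) ^ ks (i+2))).prod := by
    rw [List.range_succ_eq_map, List.map_cons, List.map_map, List.prod_cons]
    rfl
  rw [hsplit, ← mul_assoc, ← zpow_add, mul_assoc, push n ks (2*n) le_rfl (-kk),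
    ← mul_assoc, ← zpow_add, sum_conv]
  congr 1
  congr 1
  ring
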